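/- For any prime p, the group of continuous group homomorphisms from Z_p^× to the additive group Z_p is a free Z_p-module of rank 1. In particular it is torsion-free as an abelian group. -/

import Mathlib

open Filter Topology

namespace PadicHomAux

variable (p : ℕ) [hp : Fact p.Prime]
set_option linter.unusedSectionVars false

/-- exponent: 2 for p = 2, 1 otherwise -/
def ee : ℕ := if p = 2 then 2 else 1

/-- q = p^e, i.e. p for odd p and 4 for p = 2 -/
noncomputable def qq : ℤ_[p] := (p : ℤ_[p]) ^ ee p

/-- the topological generator 1 + q of the principal units -/
noncomputable def gg : ℤ_[p] := 1 + qq p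

/-- the exponent killing the torsion -/
def mm : ℕ := if p = 2 then 2 else p - 1

lemma two_le_p : 2 ≤ p := hp.out.two_le

lemma p_pos : (0:ℝ) < (p:ℝ) := by
  have := two_le_p p; positivity

lemma rp_pos : (0:ℝ) < ((p:ℝ))⁻¹ := by
  have := p_pos p; positivity

lemma rp_lt_one : ((p:ℝ))⁻¹ < 1 := by
  rw [inv_lt_one_iff₀]
  right
  exact_mod_cast (two_le_p p).trans_lt' one_lt_two

lemma rp_le_one : ((p:ℝ))⁻¹ ≤ 1 := (rp_lt_one p).le

lemma one_le_ee : 1 ≤ ee p := by unfold ee; split <;> omega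

lemma norm_qq : ‖qq p‖ = ((p:ℝ))⁻¹ ^ ee p := by
  rw [qq, norm_pow, PadicInt.norm_p]

lemma norm_qq_pos : 0 < ‖qq p‖ := by
  rw [norm_qq]; exact pow_pos (rp_pos p) _

lemma norm_qq_le_rp : ‖qq p‖ ≤ ((p:ℝ))⁻¹ := by
  rw [norm_qq]
  calc ((p:ℝ))⁻¹ ^ ee p ≤ ((p:ℝ))⁻¹ ^ 1 :=
        pow_le_pow_of_le_one (rp_pos p).le (rp_le_one p) (one_le_ee p)
    _ = ((p:ℝ))⁻¹ := pow_one _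

lemma norm_qq_le_one : ‖qq p‖ ≤ 1 := (norm_qq_le_rp p).trans (rp_le_one p)

lemma norm_qq_lt_one : ‖qq p‖ < 1 := (norm_qq_le_rp p).trans_lt (rp_lt_one p)

/-- ultrametric: if `‖a - b‖ < ‖b‖` then `‖a‖ = ‖b‖` -/
lemma norm_eq_of_sub_lt {a b : ℤ_[p]} (h : ‖a - b‖ < ‖b‖) : ‖a‖ = ‖b‖ := by
  have h1 : ‖a‖ ≤ ‖b‖ := by
    have heq : a = b + (a - b) := by ring
    rw [heq]
    exact (PadicInt.nonarchimedean _ _).trans (by rw [max_eq_left h.le])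
  have h2 : ‖b‖ ≤ max ‖a‖ ‖b - a‖ := by
    have heq : b = a + (b - a) := by ring
    conv_lhs => rw [heq]
    exact PadicInt.nonarchimedean _ _
  rcases le_max_iff.mp h2 with h3 | h3
  · exact le_antisymm h1 h3
  · rw [norm_sub_rev] at h3
    exact absurd (h3.trans_lt h) (lt_irrefl _)

/-- `‖u^b - 1 - b (u-1)‖ ≤ ‖u-1‖²` for all `u ∈ ℤ_p`, `b ∈ ℕ`. -/
lemma pow_est (u : ℤ_[p]) : ∀ b : ℕ, ‖u ^ b - 1 - (b : ℤ_[p]) * (u - 1)‖ ≤ ‖u - 1‖ ^ 2 := by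
  intro b
  induction b with
  | zero => simp [sq_nonneg]
  | succ b ih =>
    have key : u ^ (b+1) - 1 - ((b:ℤ_[p]) + 1) * (u - 1)
        = u * (u ^ b - 1 - (b : ℤ_[p]) * (u - 1)) + (b : ℤ_[p]) * (u - 1) ^ 2 := by
      ring
    rw [Nat.cast_add, Nat.cast_one, key]
    refine (PadicInt.nonarchimedean _ _).trans (max_le ?_ ?_)
    · rw [norm_mul]
      calc ‖u‖ * ‖u ^ b - 1 - (b : ℤ_[p]) * (u - 1)‖
          ≤ 1 * ‖u - 1‖ ^ 2 := mul_le_mul (PadicInt.norm_le_one u) ih (norm_nonneg _) zero_le_one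
        _ = ‖u - 1‖ ^ 2 := one_mul _
    · rw [norm_mul, norm_pow]
      calc ‖(b : ℤ_[p])‖ * ‖u - 1‖ ^ 2 ≤ 1 * ‖u - 1‖ ^ 2 :=
            mul_le_mul_of_nonneg_right (PadicInt.norm_le_one _) (by positivity)
        _ = _ := one_mul _

/-- key estimate: `‖(1+x)^p - 1 - p x‖ ≤ ‖x‖ / p²` when `‖x‖ ≤ ‖q‖`. -/
lemma pow_p_est (x : ℤ_[p]) (hx : ‖x‖ ≤ ‖qq p‖) :
    ‖(1 + x) ^ p - 1 - (p : ℤ_[p]) * x‖ ≤ ‖x‖ * ((p:ℝ))⁻¹ ^ 2 := by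
  by_cases hp2 : p = 2
  · subst hp2
    have key : (1 + x) ^ 2 - 1 - (2 : ℤ_[2]) * x = x ^ 2 := by ring
    have h4 : ‖qq 2‖ = ((2:ℝ))⁻¹ ^ 2 := by rw [norm_qq]; norm_num [ee]
    calc ‖(1 + x) ^ 2 - 1 - (2 : ℤ_[2]) * x‖ = ‖x‖ * ‖x‖ := by
          rw [key, norm_pow, sq]
      _ ≤ ‖x‖ * ((2:ℝ))⁻¹ ^ 2 := by
          refine mul_le_mul_of_nonneg_left (hx.trans ?_) (norm_nonneg _)
          exact le_of_eq h4
  · -- odd prime case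
    have hp3 : 3 ≤ p := by
      rcases (two_le_p p).lt_or_eq with h | h
      · omega
      · omega
    have hq : ‖qq p‖ = ((p:ℝ))⁻¹ := by rw [norm_qq]; simp [ee, hp2]
    have hbin : (1 + x) ^ p = ∑ k ∈ Finset.range (p + 1), x ^ k * (p.choose k : ℤ_[p]) := by
      rw [add_comm 1 x]
      simpa using add_pow x 1 p
    have hsplit : (1 + x) ^ p - 1 - (p : ℤ_[p]) * x
        = ∑ k ∈ Finset.Ico 2 (p + 1), x ^ k * (p.choose k : ℤ_[p]) := by
      rw [hbin, Finset.range_eq_Ico, Finset.sum_eq_sum_Ico_succ_bot (by omega),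
        Finset.sum_eq_sum_Ico_succ_bot (by omega)]
      simp [Nat.choose_one_right, mul_comm]
    rw [hsplit]
    refine IsUltrametricDist.norm_sum_le_of_forall_le_of_nonneg ?_ ?_
    · positivity
    · intro k hk
      obtain ⟨hk2, hkp⟩ := Finset.mem_Ico.mp hk
      rw [norm_mul, norm_pow]
      have hxle1 : ‖x‖ ≤ 1 := PadicInt.norm_le_one x
      have hxrp : ‖x‖ ≤ ((p:ℝ))⁻¹ := hx.trans_eq hq
      by_cases hkp' : k = p
      · rw [hkp', Nat.choose_self, Nat.cast_one, norm_one, mul_one]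
        have h1 : ‖x‖ ^ p = ‖x‖ * ‖x‖ ^ (p - 1) := by
          rw [← pow_succ']
          congr 1
          omega
        have h2 : ‖x‖ ^ (p - 1) ≤ ((p:ℝ))⁻¹ ^ 2 := by
          calc ‖x‖ ^ (p - 1) ≤ ((p:ℝ))⁻¹ ^ (p - 1) :=
                pow_le_pow_left₀ (norm_nonneg _) hxrp _
            _ ≤ ((p:ℝ))⁻¹ ^ 2 :=
                pow_le_pow_of_le_one (rp_pos p).le (rp_le_one p) (by omega)
        calc ‖x‖ ^ p = ‖x‖ * ‖x‖ ^ (p - 1) := h1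
          _ ≤ ‖x‖ * ((p:ℝ))⁻¹ ^ 2 := mul_le_mul_of_nonneg_left h2 (norm_nonneg _)
      · -- 2 ≤ k < p : p ∣ choose p k
        have hdvd : p ∣ p.choose k := hp.out.dvd_choose_self (by omega) (by omega)
        obtain ⟨t, ht⟩ := hdvd
        have hc : ‖((p.choose k : ℕ) : ℤ_[p])‖ ≤ ((p:ℝ))⁻¹ := by
          rw [ht]
          push_cast
          rw [norm_mul, PadicInt.norm_p]
          calc ((p:ℝ))⁻¹ * ‖((t:ℕ) : ℤ_[p])‖ ≤ ((p:ℝ))⁻¹ * 1 :=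
                mul_le_mul_of_nonneg_left (PadicInt.norm_le_one _) (rp_pos p).le
            _ = ((p:ℝ))⁻¹ := mul_one _
        have h1 : ‖x‖ ^ k ≤ ‖x‖ * ((p:ℝ))⁻¹ := by
          calc ‖x‖ ^ k ≤ ‖x‖ ^ 2 :=
                pow_le_pow_of_le_one (norm_nonneg _) hxle1 hk2
            _ = ‖x‖ * ‖x‖ := sq ‖x‖
            _ ≤ ‖x‖ * ((p:ℝ))⁻¹ := mul_le_mul_of_nonneg_left hxrp (norm_nonneg _)
        calc ‖x‖ ^ k * ‖((p.choose k : ℕ) : ℤ_[p])‖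
            ≤ (‖x‖ * ((p:ℝ))⁻¹) * ((p:ℝ))⁻¹ :=
              mul_le_mul h1 hc (norm_nonneg _) (by positivity)
          _ = ‖x‖ * ((p:ℝ))⁻¹ ^ 2 := by ring

/-- `‖g^(p^n) - 1 - p^n q‖ ≤ ‖q‖ / p^(n+1)` -/
lemma gg_pow_pow_est : ∀ n : ℕ,
    ‖gg p ^ p ^ n - 1 - (p : ℤ_[p]) ^ n * qq p‖ ≤ ‖qq p‖ * ((p:ℝ))⁻¹ ^ (n + 1) := by
  intro n
  induction n with
  | zero =>
    have : gg p ^ p ^ 0 - 1 - (p : ℤ_[p]) ^ 0 * qq p = 0 := by simp [gg]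
    rw [this, norm_zero]
    positivity
  | succ n ih =>
    set x := gg p ^ p ^ n - 1 with hxdef
    have hxq : ‖x - (p : ℤ_[p]) ^ n * qq p‖ ≤ ‖qq p‖ * ((p:ℝ))⁻¹ ^ (n + 1) := by
      simpa [hxdef, sub_sub] using ih
    have hpnq : ‖(p : ℤ_[p]) ^ n * qq p‖ = ((p:ℝ))⁻¹ ^ n * ‖qq p‖ := by
      rw [norm_mul, norm_pow, PadicInt.norm_p]
    have hxn : ‖x‖ ≤ ‖qq p‖ * ((p:ℝ))⁻¹ ^ n := by
      have heq : x = (x - (p : ℤ_[p]) ^ n * qq p) + (p : ℤ_[p]) ^ n * qq p := by ring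
      rw [heq]
      refine (PadicInt.nonarchimedean _ _).trans (max_le ?_ ?_)
      · refine hxq.trans ?_
        refine mul_le_mul_of_nonneg_left ?_ (norm_qq_pos p).le
        exact pow_le_pow_of_le_one (rp_pos p).le (rp_le_one p) (by omega)
      · rw [hpnq, mul_comm]
    have hxqq : ‖x‖ ≤ ‖qq p‖ := by
      refine hxn.trans ?_
      calc ‖qq p‖ * ((p:ℝ))⁻¹ ^ n ≤ ‖qq p‖ * 1 :=
            mul_le_mul_of_nonneg_left (pow_le_one₀ (rp_pos p).le (rp_le_one p)) (norm_qq_pos p).le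
        _ = ‖qq p‖ := mul_one _
    have hpow : gg p ^ p ^ (n + 1) = (1 + x) ^ p := by
      rw [hxdef]
      have : (1 : ℤ_[p]) + (gg p ^ p ^ n - 1) = gg p ^ p ^ n := by ring
      rw [this, ← pow_mul, pow_succ]
    have key : gg p ^ p ^ (n+1) - 1 - (p : ℤ_[p]) ^ (n+1) * qq p
        = ((1 + x) ^ p - 1 - (p : ℤ_[p]) * x) + (p : ℤ_[p]) * (x - (p : ℤ_[p]) ^ n * qq p) := by
      rw [hpow]; ring
    rw [key]
    refine (PadicInt.nonarchimedean _ _).trans (max_le ?_ ?_)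
    · refine (pow_p_est p x hxqq).trans ?_
      calc ‖x‖ * ((p:ℝ))⁻¹ ^ 2 ≤ (‖qq p‖ * ((p:ℝ))⁻¹ ^ n) * ((p:ℝ))⁻¹ ^ 2 :=
            mul_le_mul_of_nonneg_right hxn (by positivity)
        _ = (‖qq p‖ * ((p:ℝ))⁻¹ ^ (n + 2)) := by ring
        _ ≤ ‖qq p‖ * ((p:ℝ))⁻¹ ^ (n + 1 + 1) := le_of_eq (by ring_nf)
    · rw [norm_mul, PadicInt.norm_p]
      calc ((p:ℝ))⁻¹ * ‖x - (p : ℤ_[p]) ^ n * qq p‖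
          ≤ ((p:ℝ))⁻¹ * (‖qq p‖ * ((p:ℝ))⁻¹ ^ (n + 1)) :=
            mul_le_mul_of_nonneg_left hxq (rp_pos p).le
        _ = ‖qq p‖ * ((p:ℝ))⁻¹ ^ (n + 1 + 1) := by ring

/-- `‖g^(p^n) - 1‖ = ‖q‖ / p^n` -/
lemma norm_gg_pow_pow (n : ℕ) : ‖gg p ^ p ^ n - 1‖ = ‖qq p‖ * ((p:ℝ))⁻¹ ^ n := by
  have h1 := gg_pow_pow_est p n
  have hb : ‖(p : ℤ_[p]) ^ n * qq p‖ = ‖qq p‖ * ((p:ℝ))⁻¹ ^ n := by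
    rw [norm_mul, norm_pow, PadicInt.norm_p, mul_comm]
  have hlt : ‖qq p‖ * ((p:ℝ))⁻¹ ^ (n + 1) < ‖qq p‖ * ((p:ℝ))⁻¹ ^ n := by
    refine mul_lt_mul_of_pos_left ?_ (norm_qq_pos p)
    exact pow_lt_pow_right_of_lt_one₀ (rp_pos p) (rp_lt_one p) (by omega)
  have := norm_eq_of_sub_lt p (a := gg p ^ p ^ n - 1) (b := (p : ℤ_[p]) ^ n * qq p)
    (by rw [hb]; exact lt_of_le_of_lt (by simpa [sub_sub] using h1) hlt)
  rw [this, hb]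

omit hp in
lemma zmod2_cases : ∀ v : ZMod 2, v = 0 ∨ v = 1 := by decide

lemma norm_gg : ‖gg p‖ = 1 := by
  have h : ‖gg p - (1:ℤ_[p])‖ < ‖(1:ℤ_[p])‖ := by
    rw [norm_one]
    have : gg p - 1 = qq p := by rw [gg]; ring
    rw [this]
    exact norm_qq_lt_one p
  simpa using norm_eq_of_sub_lt p h

lemma norm_gg_pow (k : ℕ) : ‖gg p ^ k‖ = 1 := by
  rw [norm_pow, norm_gg, one_pow]

lemma norm_natCast_eq_one {m : ℕ} (hm : ¬ p ∣ m) : ‖(m : ℤ_[p])‖ = 1 := by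
  refine le_antisymm (PadicInt.norm_le_one _) ?_
  by_contra hc
  push_neg at hc
  have : ‖(((m:ℤ)) : ℤ_[p])‖ < 1 := by push_cast; exact hc
  rw [PadicInt.norm_int_lt_one_iff_dvd] at this
  exact hm (by exact_mod_cast this)

/-- `‖g^k - 1‖ = ‖q‖·‖k‖` for all naturals k. -/
lemma norm_gg_pow_sub_one (k : ℕ) : ‖gg p ^ k - 1‖ = ‖qq p‖ * ‖(k : ℤ_[p])‖ := by
  rcases Nat.eq_zero_or_pos k with hk0 | hk0
  · subst hk0; simp
  set n := k.factorization p with hn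
  set m := ordCompl[p] k with hm
  have hk : p ^ n * m = k := Nat.ordProj_mul_ordCompl_eq_self k p
  have hmd : ¬ p ∣ m := Nat.not_dvd_ordCompl hp.out (by omega)
  have hnormm : ‖(m : ℤ_[p])‖ = 1 := norm_natCast_eq_one p hmd
  have hnormk : ‖(k : ℤ_[p])‖ = ((p:ℝ))⁻¹ ^ n := by
    rw [← hk]
    push_cast
    rw [norm_mul, norm_pow, PadicInt.norm_p, hnormm, mul_one]
  set u := gg p ^ p ^ n with hu
  set y := u - 1 with hy
  have hyn : ‖y‖ = ‖qq p‖ * ((p:ℝ))⁻¹ ^ n := norm_gg_pow_pow p n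
  have hy0 : 0 < ‖y‖ := by
    rw [hyn]
    exact mul_pos (norm_qq_pos p) (pow_pos (rp_pos p) n)
  have hylt : ‖y‖ < 1 := by
    rw [hyn]
    calc ‖qq p‖ * ((p:ℝ))⁻¹ ^ n ≤ ‖qq p‖ * 1 :=
          mul_le_mul_of_nonneg_left (pow_le_one₀ (rp_pos p).le (rp_le_one p)) (norm_qq_pos p).le
      _ = ‖qq p‖ := mul_one _
      _ < 1 := norm_qq_lt_one p
  have hgk : gg p ^ k = u ^ m := by rw [hu, ← pow_mul, hk]
  have hest : ‖u ^ m - 1 - (m : ℤ_[p]) * y‖ < ‖(m : ℤ_[p]) * y‖ := by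
    refine lt_of_le_of_lt (by simpa [hy] using pow_est p u m) ?_
    rw [norm_mul, hnormm, one_mul, sq]
    calc ‖y‖ * ‖y‖ < 1 * ‖y‖ := by
          exact mul_lt_mul_of_pos_right hylt hy0
      _ = ‖y‖ := one_mul _
  have := norm_eq_of_sub_lt p (a := u ^ m - 1) (b := (m : ℤ_[p]) * y)
    (by rw [sub_sub] at hest ⊢; exact hest)
  rw [hgk, this, norm_mul, hnormm, one_mul, hyn, hnormk]

lemma norm_gg_pow_sub_le (j k : ℕ) (h : k ≤ j) :
    ‖gg p ^ j - gg p ^ k‖ = ‖qq p‖ * ‖(j : ℤ_[p]) - (k : ℤ_[p])‖ := by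
  have hj : j = k + (j - k) := by omega
  have key : gg p ^ j - gg p ^ k = gg p ^ k * (gg p ^ (j - k) - 1) := by
    rw [mul_sub, mul_one, ← pow_add, ← hj]
  rw [key, norm_mul, norm_gg_pow, one_mul, norm_gg_pow_sub_one]
  congr 1
  rw [← Nat.cast_sub h]

/-- key isometry on natural powers -/
lemma norm_gg_pow_sub (j k : ℕ) :
    ‖gg p ^ j - gg p ^ k‖ = ‖qq p‖ * ‖(j : ℤ_[p]) - (k : ℤ_[p])‖ := by
  rcases le_total k j with h | h
  · exact norm_gg_pow_sub_le p j k h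
  · rw [norm_sub_rev, norm_sub_rev ((j : ℤ_[p])) _]
    exact norm_gg_pow_sub_le p k j h

lemma pow_neg_cast (n : ℕ) : ((p:ℝ)) ^ (-(n:ℤ)) = ((p:ℝ))⁻¹ ^ n := by
  rw [zpow_neg, zpow_natCast, inv_pow]

lemma norm_appr_sub (a : ℤ_[p]) (n : ℕ) : ‖a - (a.appr n : ℤ_[p])‖ ≤ ((p:ℝ))⁻¹ ^ n := by
  rw [← pow_neg_cast p n]
  rw [PadicInt.norm_le_pow_iff_mem_span_pow]
  exact PadicInt.appr_spec n a

lemma tendsto_of_norm_le {f : ℕ → ℤ_[p]} {L : ℤ_[p]} (C : ℝ)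
    (h : ∀ n, ‖f n - L‖ ≤ C * ((p:ℝ))⁻¹ ^ n) : Tendsto f atTop (𝓝 L) := by
  rw [tendsto_iff_norm_sub_tendsto_zero]
  have h0 : Tendsto (fun n : ℕ => C * ((p:ℝ))⁻¹ ^ n) atTop (𝓝 0) := by
    simpa using (tendsto_pow_atTop_nhds_zero_of_lt_one (rp_pos p).le (rp_lt_one p)).const_mul C
  exact squeeze_zero (fun n => norm_nonneg _) h h0

lemma tendsto_appr (a : ℤ_[p]) : Tendsto (fun n => (a.appr n : ℤ_[p])) atTop (𝓝 a) := by
  refine tendsto_of_norm_le p 1 fun n => ?_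
  rw [one_mul, norm_sub_rev]
  exact norm_appr_sub p a n

/-- approximating sequence for `g^a` -/
noncomputable def Fn (a : ℤ_[p]) (n : ℕ) : ℤ_[p] := gg p ^ (a.appr n)

lemma norm_Fn_sub (a b : ℤ_[p]) (n : ℕ) :
    ‖Fn p a n - Fn p b n‖ = ‖qq p‖ * ‖((a.appr n : ℤ_[p])) - ((b.appr n : ℤ_[p]))‖ :=
  norm_gg_pow_sub p _ _

lemma cauchy_Fn (a : ℤ_[p]) : CauchySeq (Fn p a) := by
  refine cauchySeq_of_le_geometric ((p:ℝ))⁻¹ 1 (rp_lt_one p) fun n => ?_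
  rw [dist_eq_norm]
  simp only [Fn]
  rw [norm_gg_pow_sub]
  have h1 : ‖((a.appr n : ℤ_[p])) - ((a.appr (n+1) : ℤ_[p]))‖ ≤ ((p:ℝ))⁻¹ ^ n := by
    have heq : ((a.appr n : ℤ_[p])) - ((a.appr (n+1) : ℤ_[p]))
        = -(a - (a.appr n : ℤ_[p])) + (a - (a.appr (n+1) : ℤ_[p])) := by ring
    rw [heq]
    refine (PadicInt.nonarchimedean _ _).trans (max_le ?_ ?_)
    · rw [norm_neg]; exact norm_appr_sub p a n
    · refine (norm_appr_sub p a (n+1)).trans ?_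
      exact pow_le_pow_of_le_one (rp_pos p).le (rp_le_one p) (by omega)
  calc ‖qq p‖ * ‖((a.appr n : ℤ_[p])) - ((a.appr (n+1) : ℤ_[p]))‖
      ≤ 1 * ((p:ℝ))⁻¹ ^ n :=
        mul_le_mul (norm_qq_le_one p) h1 (norm_nonneg _) zero_le_one
    _ = 1 * ((p:ℝ))⁻¹ ^ n := rfl

/-- `F a = g^a`, the continuous extension of `n ↦ g^n`. -/
noncomputable def F (a : ℤ_[p]) : ℤ_[p] :=
  (cauchySeq_tendsto_of_complete (cauchy_Fn p a)).choose

lemma F_tendsto (a : ℤ_[p]) : Tendsto (Fn p a) atTop (𝓝 (F p a)) :=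
  (cauchySeq_tendsto_of_complete (cauchy_Fn p a)).choose_spec

lemma F_dist (a b : ℤ_[p]) : ‖F p a - F p b‖ = ‖qq p‖ * ‖a - b‖ := by
  have h1 : Tendsto (fun n => ‖Fn p a n - Fn p b n‖) atTop (𝓝 ‖F p a - F p b‖) :=
    ((F_tendsto p a).sub (F_tendsto p b)).norm
  have h2 : Tendsto (fun n => ‖Fn p a n - Fn p b n‖) atTop (𝓝 (‖qq p‖ * ‖a - b‖)) := by
    have heq : (fun n => ‖Fn p a n - Fn p b n‖)
        = fun n => ‖qq p‖ * ‖((a.appr n : ℤ_[p])) - ((b.appr n : ℤ_[p]))‖ :=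
      funext fun n => norm_Fn_sub p a b n
    rw [heq]
    exact (((tendsto_appr p a).sub (tendsto_appr p b)).norm).const_mul ‖qq p‖
  exact tendsto_nhds_unique h1 h2

lemma F_add (a b : ℤ_[p]) : F p (a + b) = F p a * F p b := by
  have h1 : Tendsto (fun n => Fn p a n * Fn p b n) atTop (𝓝 (F p a * F p b)) :=
    (F_tendsto p a).mul (F_tendsto p b)
  have h3 : Tendsto (fun n => Fn p (a+b) n - Fn p a n * Fn p b n) atTop (𝓝 0) := by
    rw [tendsto_zero_iff_norm_tendsto_zero]
    have heq : (fun n => ‖Fn p (a+b) n - Fn p a n * Fn p b n‖)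
        = fun n => ‖qq p‖ * ‖(((a+b).appr n : ℤ_[p])) - ((a.appr n : ℤ_[p]) + (b.appr n : ℤ_[p]))‖ := by
      funext n
      have : Fn p a n * Fn p b n = gg p ^ (a.appr n + b.appr n) := by
        rw [Fn, Fn, pow_add]
      rw [Fn, this, norm_gg_pow_sub]
      push_cast
      ring_nf
    rw [heq]
    have hlim : Tendsto (fun n => ‖qq p‖ *
        ‖(((a+b).appr n : ℤ_[p])) - ((a.appr n : ℤ_[p]) + (b.appr n : ℤ_[p]))‖) atTop
        (𝓝 (‖qq p‖ * ‖(a + b) - (a + b)‖)) :=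
      (((tendsto_appr p (a+b)).sub ((tendsto_appr p a).add (tendsto_appr p b))).norm).const_mul _
    simpa using hlim
  have h4 : Tendsto (Fn p (a+b)) atTop (𝓝 (F p a * F p b)) := by
    have := h3.add h1
    simpa using this
  exact tendsto_nhds_unique (F_tendsto p (a+b)) h4

lemma F_natCast (k : ℕ) : F p ((k : ℤ_[p])) = gg p ^ k := by
  refine tendsto_nhds_unique (F_tendsto p _) (tendsto_of_norm_le p 1 fun n => ?_)
  rw [Fn, norm_gg_pow_sub, one_mul]
  calc ‖qq p‖ * ‖((((k:ℤ_[p]).appr n : ℕ) : ℤ_[p])) - ((k : ℤ_[p]))‖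
      ≤ 1 * ((p:ℝ))⁻¹ ^ n := by
        refine mul_le_mul (norm_qq_le_one p) ?_ (norm_nonneg _) zero_le_one
        rw [norm_sub_rev]
        exact norm_appr_sub p _ n
    _ = ((p:ℝ))⁻¹ ^ n := one_mul _

lemma F_zero : F p 0 = 1 := by
  have := F_natCast p 0
  simpa using this

lemma F_one : F p 1 = gg p := by
  have := F_natCast p 1
  simpa using this

lemma F_sub_one (a : ℤ_[p]) : ‖F p a - 1‖ = ‖qq p‖ * ‖a‖ := by
  have := F_dist p a 0
  simpa [F_zero] using this

lemma F_inj {a b : ℤ_[p]} (h : F p a = F p b) : a = b := by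
  have h1 := F_dist p a b
  rw [h, sub_self, norm_zero] at h1
  have h2 : ‖a - b‖ = 0 := by
    rcases mul_eq_zero.mp h1.symm with h3 | h3
    · exact absurd h3 (norm_qq_pos p).ne'
    · exact h3
  exact sub_eq_zero.mp (norm_eq_zero.mp h2)

lemma F_cont : Continuous (F p) := by
  refine (LipschitzWith.of_dist_le_mul (K := 1) fun a b => ?_).continuous
  rw [dist_eq_norm, dist_eq_norm, F_dist]
  calc ‖qq p‖ * ‖a - b‖ ≤ 1 * ‖a - b‖ :=
        mul_le_mul_of_nonneg_right (norm_qq_le_one p) (norm_nonneg _)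
    _ = ↑(1:NNReal) * ‖a - b‖ := by norm_num

lemma pn_qq (n : ℕ) : (p:ℤ_[p]) ^ n * qq p = (p:ℤ_[p]) ^ (n + ee p) := by
  rw [qq, ← pow_add]

lemma norm_pn_qq (n : ℕ) : ‖(p:ℤ_[p]) ^ n * qq p‖ = ‖qq p‖ * ((p:ℝ))⁻¹ ^ n := by
  rw [norm_mul, norm_pow, PadicInt.norm_p, mul_comm]

/-- the powers of `g` are dense in the ball `‖u - 1‖ ≤ ‖q‖` -/
lemma gg_pow_dense (u : ℤ_[p]) (hu : ‖u - 1‖ ≤ ‖qq p‖) :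
    ∀ n : ℕ, ∃ m : ℕ, ‖gg p ^ m - u‖ ≤ ‖qq p‖ * ((p:ℝ))⁻¹ ^ n := by
  intro n
  induction n with
  | zero =>
    refine ⟨0, ?_⟩
    rw [pow_zero, norm_sub_rev]
    simpa using hu
  | succ n ih =>
    obtain ⟨m, hm⟩ := ih
    set t := u - gg p ^ m with ht_def
    have ht : ‖t‖ ≤ ‖qq p‖ * ((p:ℝ))⁻¹ ^ n := by rw [ht_def, norm_sub_rev]; exact hm
    have htmem : t ∈ (Ideal.span {(p:ℤ_[p]) ^ (n + ee p)} : Ideal ℤ_[p]) := by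
      rw [← PadicInt.norm_le_pow_iff_mem_span_pow, pow_neg_cast]
      refine ht.trans (le_of_eq ?_)
      rw [norm_qq, ← pow_add, add_comm]
    obtain ⟨s, hs⟩ : (p:ℤ_[p]) ^ (n + ee p) ∣ t := (Ideal.mem_span_singleton).mp htmem
    set b := s.appr 1 with hb_def
    have hbs : ‖s - (b : ℤ_[p])‖ ≤ ((p:ℝ))⁻¹ := by
      have := norm_appr_sub p s 1
      rwa [pow_one] at this
    set y := gg p ^ p ^ n - 1 with hy_def
    have h1y : (1:ℤ_[p]) + y = gg p ^ p ^ n := by rw [hy_def]; ring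
    have hy1 : ‖y‖ = ‖qq p‖ * ((p:ℝ))⁻¹ ^ n := norm_gg_pow_pow p n
    have hy2 : ‖y - (p:ℤ_[p]) ^ n * qq p‖ ≤ ‖qq p‖ * ((p:ℝ))⁻¹ ^ (n + 1) := by
      rw [hy_def]
      exact gg_pow_pow_est p n
    refine ⟨m + p ^ n * b, ?_⟩
    have hident : gg p ^ (m + p ^ n * b) - u
        = gg p ^ m * ((1 + y) ^ b - 1 - (b:ℤ_[p]) * ((1 + y) - 1))
          + gg p ^ m * (b:ℤ_[p]) * (y - (p:ℤ_[p]) ^ n * qq p)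
          + (gg p ^ m - 1) * ((b:ℤ_[p]) * ((p:ℤ_[p]) ^ n * qq p))
          + ((b:ℤ_[p]) * ((p:ℤ_[p]) ^ n * qq p) - t) := by
      rw [pow_add, pow_mul, ← h1y, ht_def]
      ring
    have hq1 : ‖qq p‖ * ((p:ℝ))⁻¹ ^ n ≤ 1 := by
      calc ‖qq p‖ * ((p:ℝ))⁻¹ ^ n ≤ 1 * 1 :=
            mul_le_mul (norm_qq_le_one p) (pow_le_one₀ (rp_pos p).le (rp_le_one p))
              (by positivity) zero_le_one
        _ = 1 := one_mul _
    have hsq : (‖qq p‖ * ((p:ℝ))⁻¹ ^ n) * (‖qq p‖ * ((p:ℝ))⁻¹ ^ n)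
        ≤ ‖qq p‖ * ((p:ℝ))⁻¹ ^ (n + 1) := by
      calc (‖qq p‖ * ((p:ℝ))⁻¹ ^ n) * (‖qq p‖ * ((p:ℝ))⁻¹ ^ n)
          ≤ (‖qq p‖ * ((p:ℝ))⁻¹ ^ n) * (((p:ℝ))⁻¹ * 1) := by
            refine mul_le_mul_of_nonneg_left ?_ (by positivity)
            exact mul_le_mul (norm_qq_le_rp p) (pow_le_one₀ (rp_pos p).le (rp_le_one p))
              (by positivity) (rp_pos p).le
        _ = ‖qq p‖ * ((p:ℝ))⁻¹ ^ (n + 1) := by rw [pow_succ]; ring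
    have hB1 : ‖gg p ^ m * ((1 + y) ^ b - 1 - (b:ℤ_[p]) * ((1 + y) - 1))‖
        ≤ ‖qq p‖ * ((p:ℝ))⁻¹ ^ (n + 1) := by
      rw [norm_mul, norm_gg_pow, one_mul]
      refine (pow_est p (1 + y) b).trans ?_
      have : ‖(1:ℤ_[p]) + y - 1‖ = ‖y‖ := by congr 1; ring
      rw [this, hy1, sq]
      exact hsq
    have hB2 : ‖gg p ^ m * (b:ℤ_[p]) * (y - (p:ℤ_[p]) ^ n * qq p)‖
        ≤ ‖qq p‖ * ((p:ℝ))⁻¹ ^ (n + 1) := by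
      rw [norm_mul, norm_mul, norm_gg_pow, one_mul]
      calc ‖(b:ℤ_[p])‖ * ‖y - (p:ℤ_[p]) ^ n * qq p‖
          ≤ 1 * (‖qq p‖ * ((p:ℝ))⁻¹ ^ (n + 1)) :=
            mul_le_mul (PadicInt.norm_le_one _) hy2 (norm_nonneg _) zero_le_one
        _ = _ := one_mul _
    have hB3 : ‖(gg p ^ m - 1) * ((b:ℤ_[p]) * ((p:ℤ_[p]) ^ n * qq p))‖
        ≤ ‖qq p‖ * ((p:ℝ))⁻¹ ^ (n + 1) := by
      rw [norm_mul, norm_mul, norm_pn_qq, norm_gg_pow_sub_one]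
      calc (‖qq p‖ * ‖((m:ℕ):ℤ_[p])‖) * (‖(b:ℤ_[p])‖ * (‖qq p‖ * ((p:ℝ))⁻¹ ^ n))
          ≤ (‖qq p‖ * 1) * (1 * (‖qq p‖ * ((p:ℝ))⁻¹ ^ n)) := by
            refine mul_le_mul ?_ ?_ (by positivity) (by positivity)
            · exact mul_le_mul_of_nonneg_left (PadicInt.norm_le_one _) (norm_nonneg _)
            · exact mul_le_mul_of_nonneg_right (PadicInt.norm_le_one _) (by positivity)
        _ = (‖qq p‖ * ((p:ℝ))⁻¹ ^ n) * ‖qq p‖ := by ring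
        _ ≤ (‖qq p‖ * ((p:ℝ))⁻¹ ^ n) * ((p:ℝ))⁻¹ :=
            mul_le_mul_of_nonneg_left (norm_qq_le_rp p) (by positivity)
        _ = ‖qq p‖ * ((p:ℝ))⁻¹ ^ (n + 1) := by rw [pow_succ]; ring
    have hB4 : ‖(b:ℤ_[p]) * ((p:ℤ_[p]) ^ n * qq p) - t‖
        ≤ ‖qq p‖ * ((p:ℝ))⁻¹ ^ (n + 1) := by
      have heq : (b:ℤ_[p]) * ((p:ℤ_[p]) ^ n * qq p) - t
          = ((p:ℤ_[p]) ^ n * qq p) * ((b:ℤ_[p]) - s) := by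
        rw [hs, pn_qq]
        ring
      rw [heq, norm_mul, norm_pn_qq]
      calc (‖qq p‖ * ((p:ℝ))⁻¹ ^ n) * ‖(b:ℤ_[p]) - s‖
          ≤ (‖qq p‖ * ((p:ℝ))⁻¹ ^ n) * ((p:ℝ))⁻¹ := by
            refine mul_le_mul_of_nonneg_left ?_ (by positivity)
            rw [norm_sub_rev]
            exact hbs
        _ = ‖qq p‖ * ((p:ℝ))⁻¹ ^ (n + 1) := by rw [pow_succ]; ring
    rw [hident]
    refine (PadicInt.nonarchimedean _ _).trans (max_le ((PadicInt.nonarchimedean _ _).trans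
      (max_le ((PadicInt.nonarchimedean _ _).trans (max_le hB1 hB2)) hB3)) hB4)

/-- surjectivity of `F` onto the ball `‖u - 1‖ ≤ ‖q‖` -/
lemma F_surj (u : ℤ_[p]) (hu : ‖u - 1‖ ≤ ‖qq p‖) : ∃ a : ℤ_[p], F p a = u := by
  choose m hm using gg_pow_dense p u hu
  set c : ℕ → ℤ_[p] := fun n => ((m n : ℕ) : ℤ_[p]) with hc_def
  have hcc : CauchySeq c := by
    refine cauchySeq_of_le_geometric ((p:ℝ))⁻¹ 1 (rp_lt_one p) fun n => ?_
    rw [dist_eq_norm]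
    have h1 : ‖qq p‖ * ‖c n - c (n+1)‖ ≤ ‖qq p‖ * (1 * ((p:ℝ))⁻¹ ^ n) := by
      rw [← norm_gg_pow_sub]
      have heq : gg p ^ m n - gg p ^ m (n+1) = (gg p ^ m n - u) + (u - gg p ^ m (n+1)) := by
        ring
      rw [heq]
      refine (PadicInt.nonarchimedean _ _).trans (max_le ?_ ?_)
      · refine (hm n).trans (le_of_eq ?_)
        ring
      · rw [norm_sub_rev]
        refine (hm (n+1)).trans ?_
        rw [one_mul]
        exact mul_le_mul_of_nonneg_left
          (pow_le_pow_of_le_one (rp_pos p).le (rp_le_one p) (by omega)) (norm_qq_pos p).le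
    have h2 := (mul_le_mul_iff_right₀ (norm_qq_pos p)).mp h1
    rw [one_mul] at h2
    rw [one_mul]
    exact h2
  obtain ⟨a, ha⟩ := cauchySeq_tendsto_of_complete hcc
  refine ⟨a, ?_⟩
  have h1 : Tendsto (fun n => F p (c n)) atTop (𝓝 (F p a)) := by
    rw [tendsto_iff_norm_sub_tendsto_zero]
    have heq : (fun n => ‖F p (c n) - F p a‖) = fun n => ‖qq p‖ * ‖c n - a‖ :=
      funext fun n => F_dist p _ _
    rw [heq]
    have : Tendsto (fun n => ‖qq p‖ * ‖c n - a‖) atTop (𝓝 (‖qq p‖ * ‖a - a‖)) :=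
      ((ha.sub tendsto_const_nhds).norm).const_mul _
    simpa using this
  have h2 : Tendsto (fun n => F p (c n)) atTop (𝓝 u) := by
    have heq : ∀ n, F p (c n) = gg p ^ m n := fun n => F_natCast p (m n)
    refine tendsto_of_norm_le p ‖qq p‖ fun n => ?_
    rw [heq n]
    exact hm n
  exact tendsto_nhds_unique h1 h2

/-- `alpha a` is `g^a` as a unit -/
noncomputable def alpha (a : ℤ_[p]) : ℤ_[p]ˣ where
  val := F p a
  inv := F p (-a)
  val_inv := by rw [← F_add]; simp [F_zero]
  inv_val := by rw [← F_add]; simp [F_zero]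

@[simp] lemma alpha_val (a : ℤ_[p]) : ((alpha p a : ℤ_[p]ˣ) : ℤ_[p]) = F p a := rfl

lemma alpha_add (a b : ℤ_[p]) : alpha p (a + b) = alpha p a * alpha p b :=
  Units.ext (by simp [F_add])

lemma alpha_inv_val (a : ℤ_[p]) : (((alpha p a)⁻¹ : ℤ_[p]ˣ) : ℤ_[p]) = F p (-a) := rfl

lemma alpha_cont : Continuous (alpha p) := by
  rw [Units.continuous_iff]
  constructor
  · exact F_cont p
  · have : (fun a => (((alpha p a)⁻¹ : ℤ_[p]ˣ) : ℤ_[p])) = fun a => F p (-a) := rfl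
    rw [this]
    exact (F_cont p).comp continuous_neg

lemma alpha_natCast (k : ℕ) : alpha p ((k : ℤ_[p])) = (alpha p 1) ^ k := by
  refine Units.ext ?_
  rw [alpha_val, F_natCast, Units.val_pow_eq_pow_val, alpha_val, F_one]

lemma alpha_inj {a b : ℤ_[p]} (h : alpha p a = alpha p b) : a = b :=
  F_inj p (by rw [← alpha_val, h, alpha_val])

/-- Fermat: `p ∣ x^(p-1) - 1` for a unit `x`. -/
lemma fermat (x : ℤ_[p]ˣ) : (p : ℤ_[p]) ∣ ((x : ℤ_[p]) ^ (p - 1) - 1) := by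
  have h1 : PadicInt.toZMod ((x : ℤ_[p]) ^ (p - 1) - 1) = 0 := by
    have hx : PadicInt.toZMod (x : ℤ_[p]) ≠ 0 := by
      have : IsUnit (PadicInt.toZMod (x : ℤ_[p])) :=
        (Units.isUnit x).map (PadicInt.toZMod : ℤ_[p] →+* ZMod p)
      exact this.ne_zero
    rw [map_sub, map_pow, map_one, ZMod.pow_card_sub_one_eq_one hx, sub_self]
  have h2 : ((x : ℤ_[p]) ^ (p - 1) - 1) ∈ RingHom.ker (PadicInt.toZMod : ℤ_[p] →+* ZMod p) := h1
  rw [PadicInt.ker_toZMod, PadicInt.maximalIdeal_eq_span_p, Ideal.mem_span_singleton] at h2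
  exact h2

/-- `‖x^m - 1‖ ≤ ‖q‖` for any unit `x`. -/
lemma unit_pow_mm (x : ℤ_[p]ˣ) : ‖(x : ℤ_[p]) ^ mm p - 1‖ ≤ ‖qq p‖ := by
  by_cases hp2 : p = 2
  · subst hp2
    obtain ⟨z, hz⟩ : (2 : ℤ_[2]) ∣ ((x : ℤ_[2]) - 1) := by
      have := fermat 2 x
      simpa using this
    have key : (x : ℤ_[2]) ^ mm 2 - 1 = (2:ℤ_[2])^2 * (z * (z + 1)) := by
      have hx : (x : ℤ_[2]) = 1 + 2 * z := by rw [← hz]; ring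
      have hm2 : mm 2 = 2 := rfl
      rw [hm2, hx]
      ring
    have hn2 : ‖(2:ℤ_[2])‖ = ((2:ℝ))⁻¹ := by
      have h := PadicInt.norm_p (p := 2)
      simpa using h
    have hqn : ‖qq 2‖ = ((2:ℝ))⁻¹ ^ 2 := by
      rw [norm_qq]
      norm_num [ee]
    rw [key, norm_mul, norm_pow, hn2, hqn]
    calc ((2:ℝ))⁻¹ ^ 2 * ‖z * (z + 1)‖ ≤ ((2:ℝ))⁻¹ ^ 2 * 1 :=
          mul_le_mul_of_nonneg_left (PadicInt.norm_le_one _) (by positivity)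
      _ = ((2:ℝ))⁻¹ ^ 2 := mul_one _
  · have hm : mm p = p - 1 := by rw [mm]; simp [hp2]
    obtain ⟨z, hz⟩ := fermat p x
    rw [hm, hz, norm_mul, PadicInt.norm_p]
    have hq : ‖qq p‖ = ((p:ℝ))⁻¹ := by rw [norm_qq]; simp [ee, hp2]
    rw [hq]
    calc ((p:ℝ))⁻¹ * ‖z‖ ≤ ((p:ℝ))⁻¹ * 1 :=
          mul_le_mul_of_nonneg_left (PadicInt.norm_le_one _) (rp_pos p).le
      _ = ((p:ℝ))⁻¹ := mul_one _

lemma mm_pos : 0 < mm p := by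
  rw [mm]
  split
  · omega
  · have := two_le_p p; omega

lemma mm_cast_ne_zero : ((mm p : ℕ) : ℤ_[p]) ≠ 0 :=
  Nat.cast_ne_zero.mpr (mm_pos p).ne'

/-- key divisibility: `x^m` is `F (m·a)` for some `a`. -/
lemma exists_phi (x : ℤ_[p]ˣ) : ∃ a : ℤ_[p], F p ((mm p : ℤ_[p]) * a) = (x : ℤ_[p]) ^ mm p := by
  by_cases hp2 : p = 2
  · subst hp2
    obtain ⟨z, hz⟩ : (2 : ℤ_[2]) ∣ ((x : ℤ_[2]) - 1) := by
      have := fermat 2 x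
      simpa using this
    have hq4 : qq 2 = 4 := by
      rw [qq]
      norm_num [ee]
    have hdich : ∀ w : ℤ_[2], PadicInt.toZMod w = 0 ∨ PadicInt.toZMod w = 1 := by
      intro w
      exact zmod2_cases _
    have hdvd : ∀ w : ℤ_[2], PadicInt.toZMod w = 0 → (2:ℤ_[2]) ∣ w := by
      intro w hw
      have h2 : w ∈ RingHom.ker (PadicInt.toZMod : ℤ_[2] →+* ZMod 2) := hw
      rw [PadicInt.ker_toZMod, PadicInt.maximalIdeal_eq_span_p, Ideal.mem_span_singleton] at h2
      exact_mod_cast h2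
    have hmm2 : (mm 2 : ℤ_[2]) = 2 := by norm_num [mm]
    have hpow : ∀ v : ℤ_[2], v ^ mm 2 = v * v := by
      intro v
      have : mm 2 = 2 := rfl
      rw [this, sq]
    rcases hdich z with hz0 | hz1
    · -- x ≡ 1 mod 4
      obtain ⟨w, hw⟩ := hdvd z hz0
      have hx4 : ‖(x : ℤ_[2]) - 1‖ ≤ ‖qq 2‖ := by
        rw [hz, hw, hq4]
        have : (2:ℤ_[2]) * ((2:ℤ_[2]) * w) = 4 * w := by ring
        rw [this, norm_mul]
        calc ‖(4:ℤ_[2])‖ * ‖w‖ ≤ ‖(4:ℤ_[2])‖ * 1 :=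
              mul_le_mul_of_nonneg_left (PadicInt.norm_le_one _) (norm_nonneg _)
          _ = ‖(4:ℤ_[2])‖ := mul_one _
      obtain ⟨a, ha⟩ := F_surj 2 ((x : ℤ_[2])) hx4
      refine ⟨a, ?_⟩
      rw [hmm2, two_mul, F_add, ha, hpow]
    · -- x ≡ 3 mod 4, use -x
      have hz1' : (2:ℤ_[2]) ∣ (z - 1) := by
        refine hdvd _ ?_
        rw [map_sub, hz1, map_one, sub_self]
      obtain ⟨w, hw⟩ := hz1'
      have hx4 : ‖(-(x : ℤ_[2])) - 1‖ ≤ ‖qq 2‖ := by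
        have hxval : (x : ℤ_[2]) = 1 + 2 * z := by rw [← hz]; ring
        have hzval : z = 1 + 2 * w := by rw [← hw]; ring
        have : (-(x : ℤ_[2])) - 1 = 4 * (-1 - w) := by
          rw [hxval, hzval]; ring
        rw [this, hq4, norm_mul]
        calc ‖(4:ℤ_[2])‖ * ‖-1 - w‖ ≤ ‖(4:ℤ_[2])‖ * 1 :=
              mul_le_mul_of_nonneg_left (PadicInt.norm_le_one _) (norm_nonneg _)
          _ = ‖(4:ℤ_[2])‖ := mul_one _
      obtain ⟨a, ha⟩ := F_surj 2 (-(x : ℤ_[2])) hx4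
      refine ⟨a, ?_⟩
      rw [hmm2, two_mul, F_add, ha, hpow]
      ring
  · -- odd p: m = p - 1 is invertible
    have hmm : ¬ p ∣ mm p := by
      rw [mm]
      simp only [hp2, if_false]
      intro hd
      have := two_le_p p
      have := Nat.le_of_dvd (by omega) hd
      omega
    have hunit : IsUnit ((mm p : ℕ) : ℤ_[p]) :=
      PadicInt.isUnit_iff.mpr (norm_natCast_eq_one p hmm)
    obtain ⟨v, hv⟩ := hunit.exists_right_inv
    obtain ⟨c, hc⟩ := F_surj p ((x : ℤ_[p]) ^ mm p) (unit_pow_mm p x)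
    refine ⟨v * c, ?_⟩
    rw [← mul_assoc, hv, one_mul, hc]

/-- the generator of the dual: `φ x` is the unique `a` with `g^(m a) = x^m`. -/
noncomputable def phi (x : ℤ_[p]ˣ) : ℤ_[p] := (exists_phi p x).choose

lemma phi_spec (x : ℤ_[p]ˣ) : F p ((mm p : ℤ_[p]) * phi p x) = (x : ℤ_[p]) ^ mm p :=
  (exists_phi p x).choose_spec

lemma phi_hom (x y : ℤ_[p]ˣ) : phi p (x * y) = phi p x + phi p y := by
  have h1 : F p ((mm p : ℤ_[p]) * phi p (x * y))
      = F p ((mm p : ℤ_[p]) * phi p x + (mm p : ℤ_[p]) * phi p y) := by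
    rw [F_add, phi_spec, phi_spec, phi_spec, Units.val_mul, mul_pow]
  have h2 := F_inj p h1
  rw [← mul_add] at h2
  exact mul_left_cancel₀ (mm_cast_ne_zero p) h2

lemma phi_gg : phi p (alpha p 1) = 1 := by
  have h1 : F p ((mm p : ℤ_[p]) * phi p (alpha p 1)) = F p ((mm p : ℤ_[p]) * 1) := by
    rw [phi_spec, alpha_val, F_one, mul_one]
    have := F_natCast p (mm p)
    rw [this]
  have h2 := F_inj p h1
  exact mul_left_cancel₀ (mm_cast_ne_zero p) h2

lemma phi_cont : Continuous (phi p) := by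
  have hFemb : IsInducing (F p) :=
    ((F_cont p).isClosedEmbedding (fun a b h => F_inj p h)).toIsInducing
  have hmul_inj : Function.Injective (fun z : ℤ_[p] => (mm p : ℤ_[p]) * z) :=
    fun a b h => mul_left_cancel₀ (mm_cast_ne_zero p) h
  have hmul_emb : IsInducing (fun z : ℤ_[p] => (mm p : ℤ_[p]) * z) :=
    ((continuous_const.mul continuous_id).isClosedEmbedding hmul_inj).toIsInducing
  have h1 : Continuous (fun x : ℤ_[p]ˣ => F p ((mm p : ℤ_[p]) * phi p x)) := by
    have : (fun x : ℤ_[p]ˣ => F p ((mm p : ℤ_[p]) * phi p x))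
        = fun x : ℤ_[p]ˣ => ((x : ℤ_[p]) ^ mm p) := funext fun x => phi_spec p x
    rw [this]
    exact (Units.continuous_val).pow (mm p)
  have h2 : Continuous (fun x : ℤ_[p]ˣ => (mm p : ℤ_[p]) * phi p x) := by
    rw [hFemb.continuous_iff]
    exact h1
  rw [hmul_emb.continuous_iff]
  exact h2

lemma hom_one {f : ℤ_[p]ˣ → ℤ_[p]} (hh : ∀ x y : ℤ_[p]ˣ, f (x * y) = f x + f y) :
    f 1 = 0 := by
  have h := hh 1 1
  rw [mul_one] at h
  exact right_eq_add.mp h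

lemma hom_pow {f : ℤ_[p]ˣ → ℤ_[p]} (hh : ∀ x y : ℤ_[p]ˣ, f (x * y) = f x + f y)
    (x : ℤ_[p]ˣ) : ∀ k : ℕ, f (x ^ k) = (k : ℤ_[p]) * f x := by
  intro k
  induction k with
  | zero => simp [hom_one p hh]
  | succ k ih =>
    rw [pow_succ, hh, ih]
    push_cast
    ring

/-- every continuous homomorphism is `f (g) • φ`. -/
lemma univ (f : ℤ_[p]ˣ → ℤ_[p]) (hc : Continuous f)
    (hh : ∀ x y : ℤ_[p]ˣ, f (x * y) = f x + f y) (x : ℤ_[p]ˣ) :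
    f x = f (alpha p 1) * phi p x := by
  have halpha : ∀ a : ℤ_[p], f (alpha p a) = a * f (alpha p 1) := by
    have h1 : Continuous (fun a : ℤ_[p] => f (alpha p a)) := hc.comp (alpha_cont p)
    have h2 : Continuous (fun a : ℤ_[p] => a * f (alpha p 1)) :=
      continuous_id.mul continuous_const
    have heq : (fun a : ℤ_[p] => f (alpha p a)) = fun a : ℤ_[p] => a * f (alpha p 1) := by
      refine (PadicInt.denseRange_natCast).equalizer h1 h2 (funext fun k => ?_)
      show f (alpha p ((k : ℕ) : ℤ_[p])) = ((k : ℕ) : ℤ_[p]) * f (alpha p 1)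
      rw [alpha_natCast, hom_pow p hh]
    exact fun a => congrFun heq a
  have h1 : x ^ mm p = alpha p ((mm p : ℤ_[p]) * phi p x) :=
    Units.ext (by rw [Units.val_pow_eq_pow_val, alpha_val, phi_spec])
  have h2 : (mm p : ℤ_[p]) * f x = f (x ^ mm p) := (hom_pow p hh x (mm p)).symm
  rw [h1, halpha] at h2
  have h3 : (mm p : ℤ_[p]) * f x = (mm p : ℤ_[p]) * (f (alpha p 1) * phi p x) := by
    rw [h2]; ring
  exact mul_left_cancel₀ (mm_cast_ne_zero p) h3

end PadicHomAux

open PadicHomAux in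
/-- For any prime `p`, the group of continuous homomorphisms from the multiplicative group
`ℤ_pˣ` to the additive group `ℤ_p` is a free `ℤ_p`-module of rank 1: there is a continuous
homomorphism `φ` such that every continuous homomorphism is a unique `ℤ_p`-multiple of `φ`.
In particular this group is torsion-free. -/
theorem continuousHom_padicUnits_to_padicInt_free_rank_one (p : ℕ) [Fact p.Prime] :
    (∃ φ : ℤ_[p]ˣ → ℤ_[p],
      (Continuous φ ∧ ∀ x y : ℤ_[p]ˣ, φ (x * y) = φ x + φ y) ∧
      ∀ f : ℤ_[p]ˣ → ℤ_[p],
        (Continuous f ∧ ∀ x y : ℤ_[p]ˣ, f (x * y) = f x + f y) →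
          ∃! c : ℤ_[p], f = fun x => c * φ x) ∧
    ∀ f : ℤ_[p]ˣ → ℤ_[p],
      (Continuous f ∧ ∀ x y : ℤ_[p]ˣ, f (x * y) = f x + f y) →
        ∀ n : ℕ, n ≠ 0 → (∀ x, (n : ℤ_[p]) * f x = 0) → ∀ x, f x = 0 := by
  constructor
  · refine ⟨phi p, ⟨phi_cont p, phi_hom p⟩, ?_⟩
    rintro f ⟨hc, hh⟩
    refine ⟨f (alpha p 1), funext fun x => univ p f hc hh x, ?_⟩
    intro c' hc'
    have h := congrFun hc' (alpha p 1)
    rw [phi_gg, mul_one] at h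
    exact h.symm
  · rintro f - n hn h x
    rcases mul_eq_zero.mp (h x) with h2 | h2
    · exact absurd h2 (Nat.cast_ne_zero.mpr hn)
    · exact h2
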